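/- Under the assumptions of the preceding SGD descent lemma, if T ≥ Δ(θ_0)/(αε) + (2/(sαε)) Σ_{t=0}^{T-1} E[‖g_t - ∇L(θ_t)‖²], then (1/T) Σ_{t=0}^{T-1} E[‖∇L(θ_t)‖²] ≤ ε. -/

import Mathlib

open MeasureTheory ProbabilityTheory


lemma sgd_descent {d : ℕ} (L : EuclideanSpace ℝ (Fin d) → ℝ)
    (gradL : EuclideanSpace ℝ (Fin d) → EuclideanSpace ℝ (Fin d)) (s : ℝ)
    (hgrad : ∀ a, HasGradientAt L (gradL a) a)
    (hsmooth : ∀ a b, ‖gradL a - gradL b‖ ≤ s * ‖a - b‖) (a b : EuclideanSpace ℝ (Fin d)) :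
    L b ≤ L a + (inner ℝ (gradL a) (b - a) : ℝ) + s / 2 * ‖b - a‖ ^ 2 := by
  set v := b - a with hv
  set ψ : ℝ → ℝ := fun u => L (a + u • v) - u * (inner ℝ (gradL a) v : ℝ) - s / 2 * u ^ 2 * ‖v‖ ^ 2
    with hψ
  have hderiv : ∀ u : ℝ, HasDerivAt ψ
      ((inner ℝ (gradL (a + u • v) - gradL a) v : ℝ) - s * u * ‖v‖ ^ 2) u := by
    intro u
    have hc : HasDerivAt (fun u : ℝ => a + u • v) v u := by
      simpa using ((hasDerivAt_id u).smul_const v).const_add a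
    have h1 : HasDerivAt (fun u : ℝ => L (a + u • v)) (inner ℝ (gradL (a + u • v)) v : ℝ) u := by
      have := (hgrad (a + u • v)).hasFDerivAt.comp_hasDerivAt u hc
      simp only [InnerProductSpace.toDual_apply_apply] at this
      exact this
    have h2 : HasDerivAt (fun u : ℝ => u * (inner ℝ (gradL a) v : ℝ)) (inner ℝ (gradL a) v : ℝ) u := by
      simpa using (hasDerivAt_id u).mul_const (inner ℝ (gradL a) v : ℝ)
    have h3 : HasDerivAt (fun u : ℝ => s / 2 * u ^ 2 * ‖v‖ ^ 2) (s * u * ‖v‖ ^ 2) u := by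
      have := ((hasDerivAt_pow 2 u).const_mul (s / 2)).mul_const (‖v‖ ^ 2)
      exact this.congr_deriv (by push_cast; ring)
    have h := (h1.sub h2).sub h3
    refine h.congr_deriv ?_
    rw [inner_sub_left]
    try ring
  have hmono : AntitoneOn ψ (Set.Icc (0:ℝ) 1) := by
    apply antitoneOn_of_deriv_nonpos (convex_Icc 0 1)
    · exact fun u _ => (hderiv u).continuousAt.continuousWithinAt
    · exact fun u _ => ((hderiv u).differentiableAt).differentiableWithinAt
    · intro u hu
      rw [interior_Icc] at hu
      rw [(hderiv u).deriv]
      have h1 : (inner ℝ (gradL (a + u • v) - gradL a) v : ℝ) ≤ s * u * ‖v‖ ^ 2 := by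
        calc (inner ℝ (gradL (a + u • v) - gradL a) v : ℝ)
            ≤ ‖gradL (a + u • v) - gradL a‖ * ‖v‖ := real_inner_le_norm _ _
          _ ≤ s * ‖(a + u • v) - a‖ * ‖v‖ :=
              mul_le_mul_of_nonneg_right (hsmooth _ _) (norm_nonneg v)
          _ = s * u * ‖v‖ ^ 2 := by
              rw [add_sub_cancel_left, norm_smul, Real.norm_eq_abs, abs_of_pos hu.1]; ring
      linarith
  have h01 := hmono (Set.mem_Icc.2 ⟨le_rfl, zero_le_one⟩) (Set.mem_Icc.2 ⟨zero_le_one, le_rfl⟩)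
    zero_le_one
  have e0 : ψ 0 = L a := by
    simp only [hψ, zero_smul, add_zero, zero_mul, zero_pow, mul_zero, sub_zero]
    norm_num
  have e1 : ψ 1 = L b - (inner ℝ (gradL a) v : ℝ) - s / 2 * ‖v‖ ^ 2 := by
    simp only [hψ, one_smul, one_mul, mul_one, one_pow]
    rw [show a + v = b by rw [hv]; abel]
  rw [e0, e1] at h01
  linarith


lemma coord_abs_le_norm {d : ℕ} (x : EuclideanSpace ℝ (Fin d)) (i : Fin d) : |x i| ≤ ‖x‖ := by
  rw [EuclideanSpace.norm_eq]
  have h1 : ‖x i‖ ^ 2 ≤ ∑ j, ‖x j‖ ^ 2 :=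
    Finset.single_le_sum (f := fun j => ‖x j‖ ^ 2) (fun j _ => sq_nonneg _) (Finset.mem_univ i)
  calc |x i| = Real.sqrt (‖x i‖ ^ 2) := by
        rw [Real.norm_eq_abs, Real.sqrt_sq_eq_abs, abs_abs]
    _ ≤ Real.sqrt (∑ j, ‖x j‖ ^ 2) := Real.sqrt_le_sqrt h1

lemma condexp_comp_clm {α E F : Type*} [NormedAddCommGroup E] [NormedSpace ℝ E] [CompleteSpace E]
    [NormedAddCommGroup F] [NormedSpace ℝ F] [CompleteSpace F]
    {m m0 : MeasurableSpace α} {μ : @Measure α m0} (hm : m ≤ m0) [SigmaFinite (μ.trim hm)]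
    (T : E →L[ℝ] F) {f : α → E} (hf : Integrable f μ) :
    (fun ω => T ((μ[f | m]) ω)) =ᵐ[μ] μ[(fun ω => T (f ω)) | m] := by
  refine ae_eq_condExp_of_forall_setIntegral_eq hm (T.integrable_comp hf) ?_ ?_ ?_
  · exact fun s _ _ => (T.integrable_comp integrable_condExp).integrableOn
  · intro s hs hμs
    rw [T.integral_comp_comm integrable_condExp.integrableOn,
      setIntegral_condExp hm hf hs, ← T.integral_comp_comm hf.integrableOn]
  · exact T.continuous.comp_aestronglyMeasurable
      (stronglyMeasurable_condExp.aestronglyMeasurable)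

lemma cross_integral_zero {d : ℕ} {Ω : Type*} {m0 : MeasurableSpace Ω} {m : MeasurableSpace Ω}
    (hm : m ≤ m0) (μ : @Measure Ω m0) [IsProbabilityMeasure μ]
    {X gf : Ω → EuclideanSpace ℝ (Fin d)}
    (hX : StronglyMeasurable[m] X)
    (hgint : Integrable gf μ)
    (hunb : μ[gf | m] =ᵐ[μ] X)
    (hIntG : Integrable (fun ω => ‖X ω‖ ^ 2) μ)
    (hIntD : Integrable (fun ω => ‖gf ω - X ω‖ ^ 2) μ) :
    ∫ ω, (inner ℝ (X ω) (gf ω - X ω) : ℝ) ∂μ = 0 := by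
  set e : Ω → EuclideanSpace ℝ (Fin d) := fun ω => gf ω - X ω with he_def
  have hXa : AEStronglyMeasurable[m0] X μ := (hX.mono hm).aestronglyMeasurable
  have hXint : Integrable X μ := by
    refine Integrable.mono' (((integrable_const (1:ℝ)).add hIntG).div_const 2) hXa ?_
    filter_upwards with ω
    have := sq_nonneg (‖X ω‖ - 1)
    simp only [Pi.add_apply, Pi.div_apply]
    nlinarith [norm_nonneg (X ω)]
  have he : Integrable e μ := hgint.sub hXint
  have hcondE : (μ[e | m]) =ᵐ[μ] 0 := by
    have h1 : (μ[X | m]) = X := condExp_of_stronglyMeasurable hm hX hXint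
    refine (condExp_sub hgint hXint m).trans ?_
    rw [h1]
    filter_upwards [hunb] with ω hω
    simp [hω]
  have key : ∀ i : Fin d, ∫ ω, X ω i * e ω i ∂μ = 0 := by
    intro i
    have hXi : StronglyMeasurable[m] (fun ω => X ω i) :=
      (EuclideanSpace.proj i).continuous.comp_stronglyMeasurable hX
    have hei_int : Integrable (fun ω => e ω i) μ := by
      simpa [PiLp.proj_apply] using (EuclideanSpace.proj (𝕜 := ℝ) i).integrable_comp he
    have hprod : Integrable (fun ω => X ω i * e ω i) μ := by
      have ha : AEStronglyMeasurable[m0] (fun ω => X ω i * e ω i) μ := by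
        have h1 := (EuclideanSpace.proj (𝕜 := ℝ) i).continuous.comp_aestronglyMeasurable hXa
        have h2 := (EuclideanSpace.proj (𝕜 := ℝ) i).continuous.comp_aestronglyMeasurable he.1
        simpa [PiLp.proj_apply, Pi.mul_def] using h1.mul h2
      refine Integrable.mono' ((hIntG.add hIntD).div_const 2) ha ?_
      filter_upwards with ω
      have h1 := coord_abs_le_norm (X ω) i
      have h2 := coord_abs_le_norm (e ω) i
      have h3 : ‖gf ω - X ω‖ = ‖e ω‖ := rfl
      simp only [Pi.add_apply, Pi.div_apply, Real.norm_eq_abs, abs_mul, h3]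
      nlinarith [mul_le_mul h1 h2 (abs_nonneg (e ω i)) (norm_nonneg (X ω)),
        sq_nonneg (‖X ω‖ - ‖e ω‖)]
    have hpull : (μ[(fun ω => X ω i) * (fun ω => e ω i) | m]) =ᵐ[μ]
        (fun ω => X ω i) * (μ[(fun ω => e ω i) | m]) :=
      condExp_mul_of_stronglyMeasurable_left hXi (by simpa [Pi.mul_def] using hprod) hei_int
    have hzero : (μ[(fun ω => e ω i) | m]) =ᵐ[μ] 0 := by
      have h1 := (condexp_comp_clm hm (EuclideanSpace.proj (𝕜 := ℝ) i) he).symm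
      refine (condExp_congr_ae (by simp [PiLp.proj_apply]) |>.trans h1).trans ?_
      filter_upwards [hcondE] with ω hω
      simp [hω]
    rw [← integral_condExp hm (f := fun ω => X ω i * e ω i)]
    have : (μ[(fun ω => X ω i * e ω i) | m]) =ᵐ[μ] 0 := by
      refine (hpull.trans ?_)
      filter_upwards [hzero] with ω hω
      simp [hω]
    rw [integral_congr_ae this]
    simp
  have hinner : ∀ ω, (inner ℝ (X ω) (e ω) : ℝ) = ∑ i, X ω i * e ω i := by
    intro ω
    simp [PiLp.inner_apply, RCLike.inner_apply, conj_trivial, mul_comm]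
  calc ∫ ω, (inner ℝ (X ω) (gf ω - X ω) : ℝ) ∂μ = ∫ ω, ∑ i, X ω i * e ω i ∂μ := by
        simp_rw [← hinner]
        rfl
    _ = ∑ i, ∫ ω, X ω i * e ω i ∂μ := by
        refine integral_finset_sum _ fun i _ => ?_
        have ha : AEStronglyMeasurable[m0] (fun ω => X ω i * e ω i) μ := by
          have h1 := (EuclideanSpace.proj (𝕜 := ℝ) i).continuous.comp_aestronglyMeasurable hXa
          have h2 := (EuclideanSpace.proj (𝕜 := ℝ) i).continuous.comp_aestronglyMeasurable he.1
          simpa [PiLp.proj_apply, Pi.mul_def] using h1.mul h2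
        refine Integrable.mono' ((hIntG.add hIntD).div_const 2) ha ?_
        filter_upwards with ω
        have h1 := coord_abs_le_norm (X ω) i
        have h2 := coord_abs_le_norm (e ω) i
        have h3 : ‖gf ω - X ω‖ = ‖e ω‖ := rfl
        simp only [Pi.add_apply, Pi.div_apply, Real.norm_eq_abs, abs_mul, h3]
        nlinarith [mul_le_mul h1 h2 (abs_nonneg (e ω i)) (norm_nonneg (X ω)),
          sq_nonneg (‖X ω‖ - ‖e ω‖)]
    _ = 0 := by simp [key]

lemma inner_int {d : ℕ} {Ω : Type*} {m0 : MeasurableSpace Ω} (μ : @Measure Ω m0)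
    {X e : Ω → EuclideanSpace ℝ (Fin d)}
    (hXa : AEStronglyMeasurable X μ) (hea : AEStronglyMeasurable e μ)
    (hIntG : Integrable (fun ω => ‖X ω‖ ^ 2) μ)
    (hIntD : Integrable (fun ω => ‖e ω‖ ^ 2) μ) :
    Integrable (fun ω => (inner ℝ (X ω) (e ω) : ℝ)) μ := by
  refine Integrable.mono' ((hIntG.add hIntD).div_const 2) (hXa.inner hea) ?_
  filter_upwards with ω
  simp only [Pi.add_apply, Pi.div_apply, Real.norm_eq_abs]
  have h1 := abs_real_inner_le_norm (X ω) (e ω)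
  nlinarith [sq_nonneg (‖X ω‖ - ‖e ω‖)]

/-- Convergence of SGD: under the SGD descent-lemma assumptions, if
`T ≥ Δ(θ₀)/(αε) + (2/(sαε)) Σ_t E‖g_t - ∇L(θ_t)‖²` then the averaged expected
squared gradient norm is at most `ε`. -/
theorem stmt_5
    {d : ℕ} {Ω : Type*} [MeasurableSpace Ω] (μ : Measure Ω) [IsProbabilityMeasure μ]
    (𝓕 : ℕ → MeasurableSpace Ω) (h𝓕 : ∀ t, 𝓕 t ≤ ‹MeasurableSpace Ω›)
    (L : EuclideanSpace ℝ (Fin d) → ℝ)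
    (gradL : EuclideanSpace ℝ (Fin d) → EuclideanSpace ℝ (Fin d))
    (s : ℝ) (hs : 0 < s)
    (hgrad : ∀ a, HasGradientAt L (gradL a) a)
    (hsmooth : ∀ a b, ‖gradL a - gradL b‖ ≤ s * ‖a - b‖)
    (hbdd : BddBelow (Set.range L))
    (θ : ℕ → Ω → EuclideanSpace ℝ (Fin d)) (g : ℕ → Ω → EuclideanSpace ℝ (Fin d))
    (η : ℕ → ℝ) (hη : ∀ t, η t ∈ Set.Ioo 0 (2 / s))
    (hupdate : ∀ t ω, θ (t + 1) ω = θ t ω - η t • g t ω)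
    (hmeas : ∀ t, Measurable[𝓕 t] (θ t))
    (hunbiased : ∀ t, μ[g t | 𝓕 t] =ᵐ[μ] fun ω => gradL (θ t ω))
    (hIntL : ∀ t, Integrable (fun ω => L (θ t ω)) μ)
    (hIntG : ∀ t, Integrable (fun ω => ‖gradL (θ t ω)‖ ^ 2) μ)
    (hIntD : ∀ t, Integrable (fun ω => ‖g t ω - gradL (θ t ω)‖ ^ 2) μ)
    (T : ℕ) (hT : 0 < T) (α : ℝ)
    (hα : α = (Finset.range T).inf'
        (by simp [Finset.nonempty_range_iff, Nat.pos_iff_ne_zero.mp hT])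
        (fun t => η t - s / 2 * η t ^ 2))
    (hαpos : 0 < α)
    (Δ : ℝ) (θ0 : EuclideanSpace ℝ (Fin d)) (hθ0 : ∀ ω, θ 0 ω = θ0)
    (hΔ : Δ = L θ0 - sInf (Set.range L))
    (ε : ℝ) (hε : 0 < ε)
    (hTbig : (T : ℝ) ≥ Δ / (α * ε)
        + (2 / (s * α * ε)) * ∑ t ∈ Finset.range T,
            ∫ ω, ‖g t ω - gradL (θ t ω)‖ ^ 2 ∂μ) :
    (1 / (T : ℝ)) * ∑ t ∈ Finset.range T, ∫ ω, ‖gradL (θ t ω)‖ ^ 2 ∂μ ≤ ε := by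
  -- notation
  set X : ℕ → Ω → EuclideanSpace ℝ (Fin d) := fun t ω => gradL (θ t ω) with hX_def
  set e : ℕ → Ω → EuclideanSpace ℝ (Fin d) := fun t ω => g t ω - gradL (θ t ω) with he_def
  set I : ℕ → ℝ := fun t => ∫ ω, ‖gradL (θ t ω)‖ ^ 2 ∂μ with hI_def
  set D : ℕ → ℝ := fun t => ∫ ω, ‖g t ω - gradL (θ t ω)‖ ^ 2 ∂μ with hD_def
  have hgc : Continuous gradL := by
    have : LipschitzWith s.toNNReal gradL := by
      refine LipschitzWith.of_dist_le_mul fun a b => ?_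
      rw [dist_eq_norm, dist_eq_norm]
      simpa [Real.coe_toNNReal s hs.le] using hsmooth a b
    exact this.continuous
  have hXsm : ∀ t, StronglyMeasurable[𝓕 t] (X t) := fun t =>
    hgc.comp_stronglyMeasurable (hmeas t).stronglyMeasurable
  have hXa : ∀ t, AEStronglyMeasurable (X t) μ := fun t =>
    ((hXsm t).mono (h𝓕 t)).aestronglyMeasurable
  have hInn : ∀ t, 0 ≤ I t := fun t => integral_nonneg fun ω => sq_nonneg _
  have hDnn : ∀ t, 0 ≤ D t := fun t => integral_nonneg fun ω => sq_nonneg _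
  -- pointwise descent
  have hpt : ∀ t ω, L (θ (t+1) ω) ≤ L (θ t ω)
      - η t * (inner ℝ (X t ω) (g t ω) : ℝ) + s / 2 * (η t ^ 2 * ‖g t ω‖ ^ 2) := by
    intro t ω
    have h := sgd_descent L gradL s hgrad hsmooth (θ t ω) (θ t ω - η t • g t ω)
    have hsub : θ t ω - η t • g t ω - θ t ω = -(η t • g t ω) := by abel
    rw [hsub] at h
    rw [hupdate t ω]
    have h1 : (inner ℝ (gradL (θ t ω)) (-(η t • g t ω)) : ℝ)
        = -(η t * (inner ℝ (X t ω) (g t ω) : ℝ)) := by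
      rw [inner_neg_right, real_inner_smul_right]
    have h2 : ‖-(η t • g t ω)‖ ^ 2 = η t ^ 2 * ‖g t ω‖ ^ 2 := by
      rw [norm_neg, norm_smul, Real.norm_eq_abs, abs_of_pos (hη t).1, mul_pow]
    rw [h1, h2] at h
    linarith
  -- per-step integral inequality
  have step : ∀ t, ∫ ω, L (θ (t+1) ω) ∂μ ≤ ∫ ω, L (θ t ω) ∂μ
      - (η t - s / 2 * η t ^ 2) * I t + (s / 2 * η t ^ 2) * D t := by
    intro t
    by_cases hgint : Integrable (g t) μ
    · -- integrable case
      have hea : AEStronglyMeasurable (e t) μ := hgint.1.sub (hXa t)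
      have hXe : Integrable (fun ω => (inner ℝ (X t ω) (e t ω) : ℝ)) μ :=
        inner_int μ (hXa t) hea (hIntG t) (hIntD t)
      have hcross : ∫ ω, (inner ℝ (X t ω) (e t ω) : ℝ) ∂μ = 0 :=
        cross_integral_zero (h𝓕 t) μ (hXsm t) hgint (hunbiased t) (hIntG t) (hIntD t)
      have h2i : Integrable (fun ω => (-(η t - s / 2 * η t ^ 2)) * ‖X t ω‖ ^ 2) μ :=
        (hIntG t).const_mul _
      have h3i : Integrable (fun ω => (s * η t ^ 2 - η t) * (inner ℝ (X t ω) (e t ω) : ℝ)) μ :=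
        hXe.const_mul _
      have h4i : Integrable (fun ω => (s / 2 * η t ^ 2) * ‖e t ω‖ ^ 2) μ :=
        (hIntD t).const_mul _
      have h12 : Integrable (fun ω => L (θ t ω)
          + (-(η t - s / 2 * η t ^ 2)) * ‖X t ω‖ ^ 2) μ := (hIntL t).add h2i
      have h123 : Integrable (fun ω => L (θ t ω)
          + (-(η t - s / 2 * η t ^ 2)) * ‖X t ω‖ ^ 2
          + (s * η t ^ 2 - η t) * (inner ℝ (X t ω) (e t ω) : ℝ)) μ := h12.add h3i
      have hmono : ∫ ω, L (θ (t+1) ω) ∂μ ≤ ∫ ω, (L (θ t ω)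
          + (-(η t - s / 2 * η t ^ 2)) * ‖X t ω‖ ^ 2
          + (s * η t ^ 2 - η t) * (inner ℝ (X t ω) (e t ω) : ℝ)
          + (s / 2 * η t ^ 2) * ‖e t ω‖ ^ 2) ∂μ := by
        refine integral_mono (hIntL (t+1)) (h123.add h4i) fun ω => ?_
        have hge : g t ω = X t ω + e t ω := by simp [hX_def, he_def]
        have hi : (inner ℝ (X t ω) (g t ω) : ℝ)
            = ‖X t ω‖ ^ 2 + (inner ℝ (X t ω) (e t ω) : ℝ) := by
          rw [hge, inner_add_right, real_inner_self_eq_norm_sq]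
        have hn : ‖g t ω‖ ^ 2 = ‖X t ω‖ ^ 2 + 2 * (inner ℝ (X t ω) (e t ω) : ℝ) + ‖e t ω‖ ^ 2 := by
          rw [hge]; exact norm_add_sq_real _ _
        have hp := hpt t ω
        rw [hi, hn] at hp
        simp only
        nlinarith [hp]
      calc ∫ ω, L (θ (t+1) ω) ∂μ ≤ _ := hmono
        _ = ∫ ω, L (θ t ω) ∂μ + (-(η t - s / 2 * η t ^ 2)) * I t
            + (s * η t ^ 2 - η t) * ∫ ω, (inner ℝ (X t ω) (e t ω) : ℝ) ∂μ
            + (s / 2 * η t ^ 2) * D t := by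
          rw [integral_add h123 h4i, integral_add h12 h3i, integral_add (hIntL t) h2i,
            integral_const_mul, integral_const_mul, integral_const_mul]
        _ = ∫ ω, L (θ t ω) ∂μ - (η t - s / 2 * η t ^ 2) * I t + (s / 2 * η t ^ 2) * D t := by
          rw [hcross]; ring
    · -- non-integrable case : gradient is a.e. zero
      have h0 : μ[g t | 𝓕 t] = 0 := condExp_of_not_integrable hgint
      have hX0 : X t =ᵐ[μ] 0 := (hunbiased t).symm.trans (by rw [h0])
      have hI0 : I t = 0 := by
        have hz : (fun ω => ‖gradL (θ t ω)‖ ^ 2) =ᵐ[μ] 0 := by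
          filter_upwards [hX0] with ω hω
          have : gradL (θ t ω) = 0 := hω
          simp [this]
        show (∫ ω, ‖gradL (θ t ω)‖ ^ 2 ∂μ) = 0
        rw [integral_congr_ae hz]; simp
      have hmono : ∫ ω, L (θ (t+1) ω) ∂μ ≤ ∫ ω, (L (θ t ω)
          + (s / 2 * η t ^ 2) * ‖e t ω‖ ^ 2) ∂μ := by
        refine integral_mono_ae (hIntL (t+1)) ((hIntL t).add ((hIntD t).const_mul _)) ?_
        filter_upwards [hX0] with ω hω
        have hXz : gradL (θ t ω) = 0 := hω
        have hp := hpt t ω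
        have hge : ‖g t ω‖ = ‖e t ω‖ := by simp [he_def, hXz]
        have hiz : (inner ℝ (X t ω) (g t ω) : ℝ) = 0 := by
          have : X t ω = 0 := hω
          rw [this, inner_zero_left]
        rw [hiz, hge] at hp
        nlinarith [hp]
      calc ∫ ω, L (θ (t+1) ω) ∂μ ≤ _ := hmono
        _ = ∫ ω, L (θ t ω) ∂μ + (s / 2 * η t ^ 2) * D t := by
          have h4i : Integrable (fun ω => (s / 2 * η t ^ 2) * ‖e t ω‖ ^ 2) μ :=
            (hIntD t).const_mul _
          rw [integral_add (hIntL t) h4i, integral_const_mul]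
        _ = ∫ ω, L (θ t ω) ∂μ - (η t - s / 2 * η t ^ 2) * I t + (s / 2 * η t ^ 2) * D t := by
          rw [hI0]; ring
  -- telescoping
  have tele : ∀ n, ∫ ω, L (θ n ω) ∂μ ≤ ∫ ω, L (θ 0 ω) ∂μ
      - ∑ t ∈ Finset.range n, (η t - s / 2 * η t ^ 2) * I t
      + ∑ t ∈ Finset.range n, (s / 2 * η t ^ 2) * D t := by
    intro n
    induction n with
    | zero => simp
    | succ n ih =>
      rw [Finset.sum_range_succ, Finset.sum_range_succ]
      linarith [step n, ih]
  have hL0 : ∫ ω, L (θ 0 ω) ∂μ = L θ0 := by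
    simp only [hθ0, integral_const, probReal_univ, smul_eq_mul, one_mul]
  have hInf : sInf (Set.range L) ≤ ∫ ω, L (θ T ω) ∂μ := by
    have hle : ∀ ω, sInf (Set.range L) ≤ L (θ T ω) := fun ω => csInf_le hbdd ⟨_, rfl⟩
    calc sInf (Set.range L) = ∫ _ω, sInf (Set.range L) ∂μ := by
          rw [integral_const, probReal_univ, one_smul]
      _ ≤ _ := integral_mono (integrable_const _) (hIntL T) hle
  -- bounds on sums
  have hβ : ∀ t ∈ Finset.range T, α * I t ≤ (η t - s / 2 * η t ^ 2) * I t := by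
    intro t ht
    refine mul_le_mul_of_nonneg_right ?_ (hInn t)
    rw [hα]; exact Finset.inf'_le _ ht
  have hγ : ∀ t ∈ Finset.range T, (s / 2 * η t ^ 2) * D t ≤ (2 / s) * D t := by
    intro t _
    refine mul_le_mul_of_nonneg_right ?_ (hDnn t)
    have h1 := (hη t).1
    have h2 := (hη t).2
    rw [lt_div_iff₀ hs] at h2
    rw [le_div_iff₀ hs]
    have hse : 0 < η t * s := mul_pos h1 hs
    have h4 : (η t * s) * (η t * s) < 2 * 2 := mul_lt_mul'' h2 h2 hse.le hse.le
    have heq : s / 2 * η t ^ 2 * s = (η t * s) * (η t * s) / 2 := by ring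
    linarith
  have hsum1 : α * ∑ t ∈ Finset.range T, I t
      ≤ ∑ t ∈ Finset.range T, (η t - s / 2 * η t ^ 2) * I t := by
    rw [Finset.mul_sum]; exact Finset.sum_le_sum hβ
  have hsum2 : ∑ t ∈ Finset.range T, (s / 2 * η t ^ 2) * D t
      ≤ (2 / s) * ∑ t ∈ Finset.range T, D t := by
    rw [Finset.mul_sum]; exact Finset.sum_le_sum hγ
  have hkey : α * ∑ t ∈ Finset.range T, I t ≤ Δ + (2 / s) * ∑ t ∈ Finset.range T, D t := by
    have h := tele T
    rw [hL0] at h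
    have := hInf
    rw [hΔ]
    linarith
  -- final algebra
  have hαε : (0:ℝ) < α * ε := by positivity
  have hexp : (Δ / (α * ε) + (2 / (s * α * ε)) * ∑ t ∈ Finset.range T, D t) * (α * ε)
      = Δ + (2 / s) * ∑ t ∈ Finset.range T, D t := by
    field_simp
  have hts : Δ + (2 / s) * ∑ t ∈ Finset.range T, D t ≤ (T : ℝ) * (α * ε) := by
    rw [← hexp]
    exact mul_le_mul_of_nonneg_right hTbig hαε.le
  have hS : α * ∑ t ∈ Finset.range T, I t ≤ α * ((T : ℝ) * ε) := by
    calc α * ∑ t ∈ Finset.range T, I t ≤ Δ + (2 / s) * ∑ t ∈ Finset.range T, D t := hkey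
      _ ≤ (T : ℝ) * (α * ε) := hts
      _ = α * ((T : ℝ) * ε) := by ring
  have hSle : ∑ t ∈ Finset.range T, I t ≤ (T : ℝ) * ε :=
    le_of_mul_le_mul_left hS hαpos
  have hTpos : (0:ℝ) < T := Nat.cast_pos.mpr hT
  rw [one_div, inv_mul_le_iff₀ hTpos]
  exact hSle.trans_eq (by ring)
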